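/- Let k be a perfect field of characteristic p > 0 and let S be a finite-dimensional commutative k-algebra. Then: (i) the intersection S' := ⋂_{n∈ℕ} S^{p^n}, where S^{p^n} = {s^{p^n} : s ∈ S}, is a k-subalgebra of S on which the Frobenius endomorphism s ↦ s^p is bijective; (ii) as a k-vector space, S is the internal direct sum of S' and the nilradical of S; (iii) the map sending a sequence (s_n)_{n∈ℕ} ∈ S^ℕ satisfying s_{n+1}^p = s_n for all n to its zeroth term s₀ is a bijection from the tilt S^♭ := lim_{s↦s^p} S onto S'. -/

import Mathlib

section Aux

variable (p : ℕ) [Fact p.Prime] (k : Type*) [Field k] [CharP k p] [PerfectRing k p]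
  (S : Type*) [CommRing S] [Algebra k S] [CharP S p]

/-- The image of the `n`-th iterated Frobenius as a `k`-subalgebra. -/
def frobRange (n : ℕ) : Subalgebra k S where
  carrier := Set.range fun s : S => s ^ p ^ n
  mul_mem' := by rintro x y ⟨a, rfl⟩ ⟨b, rfl⟩; exact ⟨a * b, by simp [mul_pow]⟩
  one_mem' := ⟨1, by simp⟩
  add_mem' := by rintro x y ⟨a, rfl⟩ ⟨b, rfl⟩; exact ⟨a + b, by simp [add_pow_char_pow]⟩
  algebraMap_mem' := fun c => ⟨algebraMap k S ((iterateFrobeniusEquiv k p n).symm c), by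
    have : (iterateFrobeniusEquiv k p n).symm c ^ p ^ n = c := by
      have := (iterateFrobeniusEquiv k p n).apply_symm_apply c
      rwa [iterateFrobeniusEquiv_def] at this
    simp only [← map_pow, this]⟩

theorem frobRange_coe (n : ℕ) :
    (frobRange p k S n : Set S) = Set.range fun s : S => s ^ p ^ n := rfl

theorem frobRange_antitone : Antitone (frobRange p k S) := by
  refine antitone_nat_of_succ_le fun n => ?_
  rintro x ⟨a, rfl⟩
  exact ⟨a ^ p, by simp [← pow_mul, ← pow_succ']⟩

theorem frobRange_succ (n : ℕ) :
    (frobRange p k S (n + 1) : Set S) = (fun s : S => s ^ p) '' (frobRange p k S n) := by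
  ext x
  constructor
  · rintro ⟨a, rfl⟩
    exact ⟨a ^ p ^ n, ⟨a, rfl⟩, by simp [← pow_mul, ← pow_succ]⟩
  · rintro ⟨y, ⟨a, rfl⟩, rfl⟩
    exact ⟨a, by simp [← pow_mul, ← pow_succ]⟩

end Aux

/-- Let `k` be a perfect field of characteristic `p > 0` and `S` a
finite-dimensional commutative `k`-algebra.  Then: (i) `S' = ⋂ₙ S^{pⁿ}` is a
`k`-subalgebra of `S` on which the Frobenius `s ↦ s^p` is bijective; (ii) as a `k`-vector
space, `S` is the internal direct sum of `S'` and the nilradical of `S`; (iii) the map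
sending a sequence `(sₙ)` with `sₙ₊₁^p = sₙ` to its zeroth term is a bijection from the
tilt `S^♭ = lim_{s ↦ s^p} S` onto `S'`. -/
theorem stmt_14 (p : ℕ) [Fact p.Prime] (k : Type*) [Field k] [CharP k p] [PerfectRing k p]
    (S : Type*) [CommRing S] [Algebra k S] [FiniteDimensional k S] :
    ∃ T : Subalgebra k S,
      (T : Set S) = (⋂ n : ℕ, Set.range fun s : S => s ^ p ^ n) ∧
      Set.BijOn (fun s : S => s ^ p) (T : Set S) (T : Set S) ∧
      IsCompl (Subalgebra.toSubmodule T) (Submodule.restrictScalars k (nilradical S)) ∧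
      Function.Injective
        (fun f : {f : ℕ → S // ∀ n, (f (n + 1)) ^ p = f n} => f.1 0) ∧
      Set.range (fun f : {f : ℕ → S // ∀ n, (f (n + 1)) ^ p = f n} => f.1 0)
        = (T : Set S) := by
  rcases subsingleton_or_nontrivial S with hS | hS
  · -- trivial (zero ring) case
    haveI : Subsingleton (Submodule k S) :=
      ⟨fun P Q => by ext x; simp [Subsingleton.elim x 0]⟩
    refine ⟨⊤, ?_, ?_, ?_, ?_, ?_⟩
    · refine (Set.eq_univ_of_forall fun x => ?_).trans
        (Set.eq_univ_of_forall fun x => ?_).symm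
      · exact Algebra.mem_top
      · exact Set.mem_iInter.2 fun n => ⟨x, Subsingleton.elim _ _⟩
    · exact ⟨fun x _ => Algebra.mem_top, fun x _ y _ _ => Subsingleton.elim x y,
        fun x _ => ⟨x, Algebra.mem_top, Subsingleton.elim _ _⟩⟩
    · constructor
      · rw [disjoint_iff]; exact Subsingleton.elim _ _
      · rw [codisjoint_iff]; exact Subsingleton.elim _ _
    · intro f g _
      exact Subtype.ext (funext fun n => Subsingleton.elim _ _)
    · refine (Set.eq_univ_of_forall fun x => ?_).trans
        (Set.eq_univ_of_forall fun x => Algebra.mem_top).symm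
      exact ⟨⟨fun _ => x, fun n => Subsingleton.elim _ _⟩, rfl⟩
  · -- nontrivial case
    haveI : CharP S p := charP_of_injective_algebraMap' (A := S) k p
    haveI : ExpChar S p := ExpChar.prime Fact.out
    haveI : IsNoetherianRing S := isNoetherianRing_iff.2 (isNoetherian_of_tower k inferInstance)
    set A := frobRange p k S with hA
    have hanti := frobRange_antitone p k S
    -- the chain stabilizes
    obtain ⟨N, hN⟩ : ∃ N, A (N + 1) = A N := by
      by_contra h
      push_neg at h
      have hlt : ∀ n, Module.finrank k (Subalgebra.toSubmodule (A (n + 1)))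
          < Module.finrank k (Subalgebra.toSubmodule (A n)) := fun n => by
        refine lt_of_le_of_ne (Submodule.finrank_mono ?_) fun he => h n ?_
        · exact_mod_cast hanti (Nat.le_succ n)
        · refine (Subalgebra.toSubmodule).injective ?_
          exact Submodule.eq_of_le_of_finrank_eq (by exact_mod_cast hanti (Nat.le_succ n)) he
      have hle : ∀ n, Module.finrank k (Subalgebra.toSubmodule (A n)) + n
          ≤ Module.finrank k (Subalgebra.toSubmodule (A 0)) := by
        intro n
        induction n with
        | zero => simp
        | succ n ih => have := hlt n; omega
      have := hle (Module.finrank k (Subalgebra.toSubmodule (A 0)) + 1)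
      omega
    have hstab : ∀ j, A (N + j) = A N := by
      intro j
      induction j with
      | zero => rfl
      | succ j ih =>
        refine SetLike.coe_injective ?_
        calc (A (N + j + 1) : Set S) = (fun s : S => s ^ p) '' (A (N + j)) :=
              frobRange_succ p k S (N + j)
          _ = (fun s : S => s ^ p) '' (A N) := by rw [ih]
          _ = (A (N + 1) : Set S) := (frobRange_succ p k S N).symm
          _ = (A N : Set S) := by rw [hN]
    have hTle : ∀ n, (A N : Set S) ⊆ (A n : Set S) := by
      intro n
      rcases le_total n N with h | h
      · exact_mod_cast hanti h
      · obtain ⟨j, rfl⟩ := Nat.exists_eq_add_of_le h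
        rw [hstab j]
    -- uniform nilpotency exponent
    obtain ⟨m, hm⟩ := IsNoetherianRing.isNilpotent_nilradical S
    have hnil : ∀ x : S, IsNilpotent x → x ^ m = 0 := by
      intro x hx
      have : x ^ m ∈ nilradical S ^ m := Ideal.pow_mem_pow (mem_nilradical.2 hx) m
      rwa [hm, Ideal.zero_eq_bot, Ideal.mem_bot] at this
    have hmlt : ∀ j : ℕ, m ≤ p ^ m := fun _ =>
      (Nat.lt_pow_self (n := m) (Fact.out : p.Prime).one_lt).le
    -- elements of T that are nilpotent vanish
    have hTnil : ∀ x ∈ (A N : Set S), IsNilpotent x → x = 0 := by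
      intro x hx hxnil
      obtain ⟨y, rfl⟩ := hTle m hx
      have hy : IsNilpotent y := ⟨p ^ m * m, by rw [pow_mul]; exact hnil _ hxnil⟩
      have hym : y ^ m = 0 := hnil y hy
      calc y ^ p ^ m = y ^ m * y ^ (p ^ m - m) := by
            rw [← pow_add, Nat.add_sub_cancel' (hmlt m)]
        _ = 0 := by rw [hym, zero_mul]
    -- Frobenius is a bijection on T
    have himg : (fun s : S => s ^ p) '' (A N : Set S) = (A N : Set S) := by
      calc (fun s : S => s ^ p) '' (A N : Set S) = (A (N + 1) : Set S) :=
            (frobRange_succ p k S N).symm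
        _ = (A N : Set S) := by rw [hN]
    have hbij : Set.BijOn (fun s : S => s ^ p) (A N : Set S) (A N : Set S) := by
      refine ⟨fun x hx => himg ▸ Set.mem_image_of_mem _ hx, ?_, himg.superset⟩
      intro x hx y hy hxy
      have : (x - y) ^ p = 0 := by
        rw [sub_pow_char]; exact sub_eq_zero.2 hxy
      have := hTnil (x - y) (sub_mem hx hy) ⟨p, this⟩
      exact sub_eq_zero.1 this
    -- iterates of Frobenius
    have hiter : ∀ (n : ℕ) (x : S), (fun s : S => s ^ p)^[n] x = x ^ p ^ n := by
      intro n
      induction n with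
      | zero => intro x; simp
      | succ n ih =>
        intro x
        rw [Function.iterate_succ_apply', ih, pow_succ, pow_mul]
    -- powers along a tilt sequence
    have hpow : ∀ (f : {f : ℕ → S // ∀ n, (f (n + 1)) ^ p = f n}) (n j : ℕ),
        (f.1 (n + j)) ^ p ^ j = f.1 n := by
      intro f n j
      induction j with
      | zero => simp
      | succ j ih =>
        rw [pow_succ', pow_mul]
        have : (f.1 (n + (j + 1))) ^ p = f.1 (n + j) := f.2 (n + j)
        rw [show n + (j + 1) = (n + j) + 1 from rfl, f.2 (n + j), ih]
    refine ⟨A N, ?_, hbij, ⟨?_, ?_⟩, ?_, ?_⟩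
    · -- T = ⋂ₙ S^{pⁿ}
      refine Set.Subset.antisymm (Set.subset_iInter fun n => ?_) ?_
      · rw [← frobRange_coe p k S n]; exact hTle n
      · exact fun x hx => Set.mem_iInter.1 hx N
    · -- disjointness with the nilradical
      rw [disjoint_iff, Submodule.eq_bot_iff]
      intro x hx
      rw [Submodule.mem_inf] at hx
      exact hTnil x hx.1 (mem_nilradical.1 hx.2)
    · -- codisjointness with the nilradical
      rw [codisjoint_iff, eq_top_iff]
      intro x _
      have hx : x ^ p ^ N ∈ (A N : Set S) := ⟨x, rfl⟩
      obtain ⟨t, ht, hteq⟩ := (hbij.iterate N).surjOn hx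
      rw [hiter N t] at hteq
      refine Submodule.mem_sup.2 ⟨t, ht, x - t, ?_, by ring⟩
      show x - t ∈ nilradical S
      refine mem_nilradical.2 ⟨p ^ N, ?_⟩
      rw [sub_pow_char_pow, hteq, sub_self]
    · -- injectivity of the tilt map
      intro f g h
      simp only at h
      refine Subtype.ext (funext fun n => ?_)
      set d := f.1 (n + m) - g.1 (n + m) with hd
      have hd0 : d ^ p ^ (n + m) = 0 := by
        rw [hd, sub_pow_char_pow]
        have h1 : (f.1 (n + m)) ^ p ^ (n + m) = f.1 0 := by
          have := hpow f 0 (n + m); simpa using this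
        have h2 : (g.1 (n + m)) ^ p ^ (n + m) = g.1 0 := by
          have := hpow g 0 (n + m); simpa using this
        rw [h1, h2, h, sub_self]
      have hdm : d ^ m = 0 := hnil d ⟨p ^ (n + m), hd0⟩
      have hdp : d ^ p ^ m = 0 := by
        calc d ^ p ^ m = d ^ m * d ^ (p ^ m - m) := by
              rw [← pow_add, Nat.add_sub_cancel' (hmlt m)]
          _ = 0 := by rw [hdm, zero_mul]
      have : f.1 n - g.1 n = 0 := by
        rw [← hpow f n m, ← hpow g n m, ← sub_pow_char_pow, ← hd, hdp]
      exact sub_eq_zero.1 this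
    · -- image of the tilt map
      refine Set.Subset.antisymm ?_ ?_
      · rintro _ ⟨f, rfl⟩
        have : ∀ n : ℕ, f.1 0 ∈ (A n : Set S) := by
          intro n
          refine ⟨f.1 n, ?_⟩
          have := hpow f 0 n; simpa using this
        exact this N
      · intro t ht
        have hstep : ∀ x : (A N : Set S), ∃ y : S, y ∈ (A N : Set S) ∧ y ^ p = x := by
          intro x
          obtain ⟨y, hy, h⟩ := hbij.surjOn x.2
          exact ⟨y, hy, h⟩
        choose ψ hψm hψp using hstep
        let F : ↥(A N : Set S) → ↥(A N : Set S) := fun x => ⟨ψ x, hψm x⟩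
        let x0 : ↥(A N : Set S) := ⟨t, ht⟩
        refine ⟨⟨fun n => (↑(F^[n] x0) : S), fun n => ?_⟩, rfl⟩
        show (↑(F^[n + 1] x0) : S) ^ p = ↑(F^[n] x0)
        rw [Function.iterate_succ_apply']
        exact hψp _
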